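/- arXiv:1009.1688 — 4 statements merged into one kernel-verified Lean document; each statement's English description precedes it below -/
import Mathlib

section
/- Let ζ : [0,T₀) → ℝ be differentiable with ζ(t) → -∞ as t → T₀⁻, and suppose there is a constant A ≥ 0 such that -A - 1 < ζ'(t) + ½ζ(t)² < A + 1 for all t. Then the blow-up rate satisfies lim_{t→T₀⁻} (T₀ - t)·ζ(t) = -2. -/
open Set Filter Topology

/-- Blow-up rate: if `ζ` is differentiable on `[0, T₀)`, tends to `-∞` as `t → T₀⁻`, and
`-A - 1 < ζ'(t) + ½ζ(t)² < A + 1` for some constant `A ≥ 0`, then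
`(T₀ - t) · ζ(t) → -2` as `t → T₀⁻`. -/
theorem riccati_blowup_rate
    (T₀ A : ℝ) (ζ ζ' : ℝ → ℝ)
    (hT : 0 < T₀) (hA : 0 ≤ A)
    (hderiv : ∀ t ∈ Set.Ico (0:ℝ) T₀, HasDerivAt ζ (ζ' t) t)
    (hbound : ∀ t ∈ Set.Ico (0:ℝ) T₀,
      -A - 1 < ζ' t + (1/2) * (ζ t)^2 ∧ ζ' t + (1/2) * (ζ t)^2 < A + 1)
    (hblow : Tendsto ζ (𝓝[Set.Ico (0:ℝ) T₀] T₀) atBot) :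
    Tendsto (fun t => (T₀ - t) * ζ t) (𝓝[Set.Ico (0:ℝ) T₀] T₀) (𝓝 (-2)) := by
  have hL : 𝓝[Set.Ico (0:ℝ) T₀] T₀ = 𝓝[<] T₀ := nhdsWithin_Ico_eq_nhdsLT hT
  rw [hL] at hblow ⊢
  -- the inverse function tends to 0
  have h0 : Tendsto (fun s => (ζ s)⁻¹) (𝓝[<] T₀) (𝓝 0) := by
    have hneg : Tendsto (fun s => -ζ s) (𝓝[<] T₀) atTop := tendsto_neg_atTop_iff.mpr hblow
    have h1 := hneg.inv_tendsto_atTop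
    have h2 : Tendsto (fun s => -(ζ s)⁻¹) (𝓝[<] T₀) (𝓝 0) := by
      simpa [Pi.inv_def, inv_neg] using h1
    simpa using h2.neg
  -- key limit : (ζ t)⁻¹ / (T₀ - t) → -1/2
  have key : Tendsto (fun t => (ζ t)⁻¹ / (T₀ - t)) (𝓝[<] T₀) (𝓝 (-(1/2))) := by
    rw [Metric.tendsto_nhds]
    intro ε hε
    set δ := ε / 2 with hδdef
    have hδ : 0 < δ := by positivity
    set K := Real.sqrt ((A + 1) / δ) + 1 with hKdef
    have hKpos : 0 < K := by positivity
    have hKsq : (A + 1) / δ ≤ K ^ 2 := by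
      have h1 : Real.sqrt ((A + 1) / δ) ^ 2 = (A + 1) / δ := Real.sq_sqrt (by positivity)
      nlinarith [Real.sqrt_nonneg ((A + 1) / δ)]
    have hAK : A + 1 ≤ δ * K ^ 2 := by
      rw [div_le_iff₀ hδ] at hKsq; linarith [hKsq]
    -- eventually ζ t < -K
    have hev : ∀ᶠ t in 𝓝[<] T₀, ζ t < -K := hblow.eventually (eventually_lt_atBot _)
    obtain ⟨l, hl, hlsub⟩ := mem_nhdsLT_iff_exists_Ioo_subset.mp hev
    set c := max l 0 with hcdef
    have hcT : c < T₀ := max_lt hl hT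
    have hcK : ∀ t ∈ Set.Ioo c T₀, ζ t < -K := by
      intro t ht
      exact hlsub ⟨lt_of_le_of_lt (le_max_left _ _) ht.1, ht.2⟩
    have hc0 : (0:ℝ) ≤ c := le_max_right _ _
    have hmem : ∀ x ∈ Set.Ioo c T₀, x ∈ Set.Ico (0:ℝ) T₀ := by
      intro x hx; exact ⟨le_trans hc0 hx.1.le, hx.2⟩
    have hne : ∀ x ∈ Set.Ioo c T₀, ζ x ≠ 0 := by
      intro x hx
      have := hcK x hx
      nlinarith
    have hu : ∀ x ∈ Set.Ioo c T₀, HasDerivWithinAt (fun y => -(ζ y)⁻¹ + y / 2)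
        ((ζ' x + (1/2) * (ζ x)^2) / (ζ x)^2) (Set.Ioo c T₀) x := by
      intro x hx
      have hz := hne x hx
      have hd := hderiv x (hmem x hx)
      have hdu : HasDerivAt (fun y => -(ζ y)⁻¹ + y / 2) (-(-ζ' x / (ζ x)^2) + 1/2) x := by
        have h1 := (hd.inv hz).neg
        have h2 : HasDerivAt (fun y : ℝ => y / 2) (1/2) x := by
          simpa using (hasDerivAt_id x).div_const 2
        exact h1.add h2
      have heq : -(-ζ' x / (ζ x)^2) + 1/2 = (ζ' x + (1/2) * (ζ x)^2) / (ζ x)^2 := by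
        field_simp
      rw [← heq]
      exact hdu.hasDerivWithinAt
    have hbnd : ∀ x ∈ Set.Ioo c T₀, ‖(ζ' x + (1/2) * (ζ x)^2) / (ζ x)^2‖ ≤ δ := by
      intro x hx
      have hb := hbound x (hmem x hx)
      have hK2 : K ^ 2 ≤ (ζ x) ^ 2 := by nlinarith [hcK x hx]
      have hpos : (0:ℝ) < (ζ x) ^ 2 := by nlinarith [hcK x hx]
      rw [Real.norm_eq_abs, abs_div, abs_of_pos hpos, div_le_iff₀ hpos]
      have habs : |ζ' x + (1/2) * (ζ x)^2| ≤ A + 1 := by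
        rw [abs_le]; constructor <;> [linarith [hb.1]; linarith [hb.2]]
      nlinarith
    have hmvt : ∀ x ∈ Set.Ioo c T₀, ∀ y ∈ Set.Ioo c T₀,
        ‖(-(ζ y)⁻¹ + y / 2) - (-(ζ x)⁻¹ + x / 2)‖ ≤ δ * ‖y - x‖ := fun x hx y hy =>
      Convex.norm_image_sub_le_of_norm_hasDerivWithin_le hu hbnd (convex_Ioo c T₀) hx hy
    -- conclude the eventual estimate
    filter_upwards [Ioo_mem_nhdsLT_of_mem (Set.mem_Ioc.mpr ⟨hcT, le_refl T₀⟩)] with t ht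
    have htT : t < T₀ := ht.2
    have hTt : 0 < T₀ - t := by linarith
    have hlim : Tendsto (fun s => |(-(ζ s)⁻¹ + s / 2) - (-(ζ t)⁻¹ + t / 2)|) (𝓝[<] T₀)
        (𝓝 |T₀ / 2 - (-(ζ t)⁻¹ + t / 2)|) := by
      have h2 : Tendsto (fun s : ℝ => s / 2) (𝓝[<] T₀) (𝓝 (T₀ / 2)) :=
        ((continuous_id.div_const 2).tendsto T₀).mono_left nhdsWithin_le_nhds
      have h3 : Tendsto (fun s => -(ζ s)⁻¹) (𝓝[<] T₀) (𝓝 0) := by simpa using h0.neg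
      have h4 : Tendsto (fun s => -(ζ s)⁻¹ + s / 2) (𝓝[<] T₀) (𝓝 (T₀ / 2)) := by
        simpa using h3.add h2
      exact (h4.sub_const _).abs
    have hineq : |T₀ / 2 - (-(ζ t)⁻¹ + t / 2)| ≤ δ * (T₀ - t) := by
      apply le_of_tendsto hlim
      filter_upwards [Ioo_mem_nhdsLT_of_mem (Set.mem_Ioc.mpr ⟨htT, le_refl T₀⟩ : T₀ ∈ Set.Ioc t T₀)] with s hs
      have hsI : s ∈ Set.Ioo c T₀ := ⟨lt_trans ht.1 hs.1, hs.2⟩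
      have hm := hmvt t ht s hsI
      rw [Real.norm_eq_abs, Real.norm_eq_abs] at hm
      have h4 : |s - t| ≤ T₀ - t := by
        rw [abs_of_pos (by linarith [hs.1] : (0:ℝ) < s - t)]; linarith [hs.2]
      calc |(-(ζ s)⁻¹ + s / 2) - (-(ζ t)⁻¹ + t / 2)| ≤ δ * |s - t| := hm
        _ ≤ δ * (T₀ - t) := by nlinarith
    have heq : (ζ t)⁻¹ / (T₀ - t) - (-(1/2)) = (T₀ / 2 - (-(ζ t)⁻¹ + t / 2)) / (T₀ - t) := by
      have hz := hne t ht
      have hne' : T₀ - t ≠ 0 := ne_of_gt hTt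
      field_simp
      ring
    rw [Real.dist_eq, heq, abs_div, abs_of_pos hTt]
    calc |T₀ / 2 - (-(ζ t)⁻¹ + t / 2)| / (T₀ - t) ≤ (δ * (T₀ - t)) / (T₀ - t) :=
          (div_le_div_iff_of_pos_right hTt).mpr hineq
      _ = δ := mul_div_cancel_right₀ δ (ne_of_gt hTt)
      _ < ε := by rw [hδdef]; linarith
  -- conclude
  have hinv : Tendsto (fun t => ((ζ t)⁻¹ / (T₀ - t))⁻¹) (𝓝[<] T₀) (𝓝 ((-(1/2):ℝ))⁻¹) :=
    key.inv₀ (by norm_num)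
  have hval : ((-(1/2):ℝ))⁻¹ = -2 := by norm_num
  rw [hval] at hinv
  apply hinv.congr'
  have hev0 : ∀ᶠ t in 𝓝[<] T₀, ζ t < -1 := hblow.eventually (eventually_lt_atBot _)
  filter_upwards [hev0, self_mem_nhdsWithin] with t ht1 ht2
  have hz : ζ t ≠ 0 := by nlinarith
  have hTt : T₀ - t ≠ 0 := by simp only [Set.mem_Iio] at ht2; intro h; linarith
  rw [inv_div]
  field_simp
end

section
/- Let M, γ : [0,T) → ℝ be differentiable functions satisfying M'(t) = -½M(t)² + (κ/2)γ(t)² + a and γ'(t) = -M(t)γ(t), where κ > 0 and a ∈ ℝ are constants and γ(0) > 0. Then γ(t) > 0 for all t ∈ [0,T), and the function w(t) := κγ(0)γ(t) + (γ(0)/γ(t))(1 + M(t)²) satisfies w'(t) = (1 + 2a)(γ(0)/γ(t))M(t). -/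
open Set

/-- For the ODE system `M' = -½M² + (κ/2)γ² + a`, `γ' = -Mγ` with `κ > 0` and
`γ(0) > 0`, one has `γ(t) > 0` throughout, and the auxiliary function
`w(t) = κγ(0)γ(t) + (γ(0)/γ(t))(1 + M(t)²)` satisfies
`w'(t) = (1 + 2a)(γ(0)/γ(t))M(t)`. -/
theorem auxiliary_function_evolution
    (T κ a : ℝ) (M γ : ℝ → ℝ)
    (hκ : 0 < κ) (hγ0 : 0 < γ 0)
    (hM : ∀ t ∈ Set.Ico (0:ℝ) T,
      HasDerivAt M (-(1/2) * (M t)^2 + (κ/2) * (γ t)^2 + a) t)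
    (hγ : ∀ t ∈ Set.Ico (0:ℝ) T, HasDerivAt γ (-(M t) * γ t) t) :
    (∀ t ∈ Set.Ico (0:ℝ) T, 0 < γ t) ∧
    ∀ t ∈ Set.Ico (0:ℝ) T,
      HasDerivAt (fun s => κ * γ 0 * γ s + (γ 0 / γ s) * (1 + (M s)^2))
        ((1 + 2 * a) * (γ 0 / γ t) * M t) t := by
  have hpos : ∀ t ∈ Set.Ico (0:ℝ) T, 0 < γ t := by
    intro t ht
    obtain ⟨ht0, htT⟩ := ht
    -- M is continuous on [0, t]
    have hMc : ContinuousOn M (Icc 0 t) := fun s hs =>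
      ((hM s ⟨hs.1, lt_of_le_of_lt hs.2 htT⟩).continuousAt).continuousWithinAt
    have hInt : ∀ s ∈ Icc (0:ℝ) t, IntervalIntegrable M MeasureTheory.volume 0 s := by
      intro s hs
      exact (hMc.mono (Icc_subset_Icc le_rfl hs.2)).intervalIntegrable_of_Icc hs.1
    set F : ℝ → ℝ := fun s => ∫ x in (0:ℝ)..s, M x with hF
    set g : ℝ → ℝ := fun s => γ s * Real.exp (F s) with hg
    have hgcont : ContinuousOn g (Icc 0 t) := by
      apply ContinuousOn.mul
      · exact fun s hs =>
          ((hγ s ⟨hs.1, lt_of_le_of_lt hs.2 htT⟩).continuousAt).continuousWithinAt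
      · apply Real.continuous_exp.comp_continuousOn
        rw [hF, show Icc (0:ℝ) t = uIcc 0 t from (uIcc_of_le ht0).symm]
        apply intervalIntegral.continuousOn_primitive_interval
        rw [uIcc_of_le ht0]
        exact hMc.integrableOn_compact isCompact_Icc
    have hgderiv : ∀ x ∈ Ico (0:ℝ) t, HasDerivWithinAt g 0 (Ici x) x := by
      intro x hx
      have hxmem : x ∈ Set.Ico (0:ℝ) T := ⟨hx.1, lt_trans hx.2 htT⟩
      have hmeas : StronglyMeasurableAtFilter M (nhdsWithin x (Ioi x))
          MeasureTheory.volume :=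
        ⟨Icc 0 t, Icc_mem_nhdsGT_of_mem hx,
          (hMc.aestronglyMeasurable measurableSet_Icc)⟩
      have hFd : HasDerivWithinAt F (M x) (Ici x) x :=
        intervalIntegral.integral_hasDerivWithinAt_right
          (hInt x ⟨hx.1, hx.2.le⟩) hmeas
          ((hM x hxmem).continuousAt.continuousWithinAt)
      have hγd : HasDerivWithinAt γ (-(M x) * γ x) (Ici x) x :=
        (hγ x hxmem).hasDerivWithinAt
      have : HasDerivWithinAt g
          ((-(M x) * γ x) * Real.exp (F x) + γ x * (Real.exp (F x) * M x))
          (Ici x) x := hγd.mul hFd.exp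
      convert this using 1
      ring
    have hconst := constant_of_has_deriv_right_zero hgcont hgderiv t
      (right_mem_Icc.mpr ht0)
    have h0 : g 0 = γ 0 := by
      simp [hg, hF]
    have hgt : γ t * Real.exp (F t) = γ 0 := by
      rw [← h0]; exact hconst
    nlinarith [Real.exp_pos (F t), hγ0]
  refine ⟨hpos, ?_⟩
  intro t ht
  have hne : γ t ≠ 0 := (hpos t ht).ne'
  have h1 : HasDerivAt (fun s => κ * γ 0 * γ s) (κ * γ 0 * (-(M t) * γ t)) t :=
    (hγ t ht).const_mul _
  have h2 : HasDerivAt (fun s => γ 0 / γ s)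
      ((0 * γ t - γ 0 * (-(M t) * γ t)) / (γ t)^2) t :=
    (hasDerivAt_const t (γ 0)).div (hγ t ht) hne
  have h3 : HasDerivAt (fun s => 1 + (M s)^2)
      (0 + 2 * M t * (-(1/2) * (M t)^2 + (κ/2) * (γ t)^2 + a)) t := by
    have := ((hM t ht).pow 2)
    exact ((hasDerivAt_const t (1:ℝ)).add this).congr_deriv (by simp)
  have h4 := h1.add (h2.mul h3)
  refine h4.congr_deriv ?_
  field_simp
  ring
end

section
/- Under the hypotheses of the previous setup (M' = -½M² + (κ/2)γ² + a, γ' = -Mγ, κ > 0, γ(0) > 0), the auxiliary function w(t) = κγ(0)γ(t) + (γ(0)/γ(t))(1 + M(t)²) satisfies |w'(t)| ≤ (1+2|a|)w(t), and hence w(t) ≤ w(0)e^{(1+2|a|)t} for all t ∈ [0,T). -/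
open Set

/-- For the ODE system `M' = -½M² + (κ/2)γ² + a`, `γ' = -Mγ` with `κ > 0`, `γ(0) > 0`
(hence `γ > 0` throughout), the auxiliary function
`w(t) = κγ(0)γ(t) + (γ(0)/γ(t))(1 + M(t)²)` satisfies `|w'(t)| ≤ (1 + 2|a|) w(t)` and
hence `w(t) ≤ w(0) e^{(1 + 2|a|)t}` for all `t ∈ [0,T)`. -/
theorem auxiliary_function_gronwall
    (T κ a : ℝ) (M γ : ℝ → ℝ)
    (hκ : 0 < κ) (hγ0 : 0 < γ 0)
    (hM : ∀ t ∈ Set.Ico (0:ℝ) T,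
      HasDerivAt M (-(1/2) * (M t)^2 + (κ/2) * (γ t)^2 + a) t)
    (hγ : ∀ t ∈ Set.Ico (0:ℝ) T, HasDerivAt γ (-(M t) * γ t) t)
    (hγpos : ∀ t ∈ Set.Ico (0:ℝ) T, 0 < γ t) :
    (∀ t ∈ Set.Ico (0:ℝ) T, ∃ d : ℝ,
      HasDerivAt (fun s => κ * γ 0 * γ s + (γ 0 / γ s) * (1 + (M s)^2)) d t ∧
      |d| ≤ (1 + 2 * |a|) * (κ * γ 0 * γ t + (γ 0 / γ t) * (1 + (M t)^2))) ∧
    ∀ t ∈ Set.Ico (0:ℝ) T,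
      κ * γ 0 * γ t + (γ 0 / γ t) * (1 + (M t)^2)
        ≤ (κ * γ 0 * γ 0 + (γ 0 / γ 0) * (1 + (M 0)^2)) * Real.exp ((1 + 2 * |a|) * t) := by
  set w : ℝ → ℝ := fun s => κ * γ 0 * γ s + (γ 0 / γ s) * (1 + (M s)^2) with hw
  have key : ∀ t ∈ Set.Ico (0:ℝ) T,
      HasDerivAt w ((1 + 2*a) * (γ 0 / γ t) * M t) t := by
    intro t ht
    have hγt : γ t ≠ 0 := (hγpos t ht).ne'
    have h1 : HasDerivAt (fun s => κ * γ 0 * γ s) (κ * γ 0 * (-(M t) * γ t)) t :=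
      (hγ t ht).const_mul _
    have h2 : HasDerivAt (fun s => γ 0 / γ s)
        ((0 * γ t - γ 0 * (-(M t) * γ t)) / (γ t)^2) t :=
      (hasDerivAt_const t (γ 0)).div (hγ t ht) hγt
    have h3 : HasDerivAt (fun s => 1 + (M s)^2)
        (0 + (2 * M t ^ 1 * (-(1/2) * (M t)^2 + (κ/2) * (γ t)^2 + a))) t :=
      (hasDerivAt_const t 1).add ((hM t ht).pow 2)
    have h := h1.add (h2.mul h3)
    convert h using 1
    · rfl
    · rfl
    · rfl
    field_simp
    ring
  have wpos : ∀ t ∈ Set.Ico (0:ℝ) T, 0 < w t := by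
    intro t ht
    have h1 := hγpos t ht
    have h2 : 0 < γ 0 / γ t := div_pos hγ0 h1
    have h3 : 0 < 1 + (M t)^2 := by positivity
    have := mul_pos h2 h3
    simp only [hw]
    nlinarith [mul_pos (mul_pos hκ hγ0) h1]
  have dbound : ∀ t ∈ Set.Ico (0:ℝ) T,
      |(1 + 2*a) * (γ 0 / γ t) * M t| ≤ (1 + 2*|a|) * w t := by
    intro t ht
    have hγt := hγpos t ht
    have hq : 0 < γ 0 / γ t := div_pos hγ0 hγt
    rw [abs_mul, abs_mul, abs_of_pos hq]
    have hA : |1 + 2*a| ≤ 1 + 2*|a| := by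
      calc |1 + 2*a| ≤ |(1:ℝ)| + |2*a| := abs_add_le _ _
        _ = 1 + 2*|a| := by rw [abs_one, abs_mul]; norm_num
    have hB : |M t| ≤ 1 + (M t)^2 := by
      nlinarith [sq_nonneg (|M t| - 1), sq_abs (M t)]
    have h1 : |1 + 2*a| * (γ 0 / γ t) * |M t| ≤ (1 + 2*|a|) * ((γ 0 / γ t) * (1 + (M t)^2)) := by
      have := mul_le_mul hA (mul_le_mul_of_nonneg_left hB hq.le) (by positivity)
        (by positivity)
      linarith [this, mul_assoc |1 + 2*a| (γ 0 / γ t) |M t|]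
    have h2 : 0 ≤ κ * γ 0 * γ t := by positivity
    have hC : (0:ℝ) ≤ 1 + 2*|a| := by positivity
    have : (1 + 2*|a|) * ((γ 0 / γ t) * (1 + (M t)^2)) ≤ (1 + 2*|a|) * w t := by
      apply mul_le_mul_of_nonneg_left _ hC
      simp only [hw]
      linarith
    linarith
  constructor
  · intro t ht
    exact ⟨_, key t ht, dbound t ht⟩
  · intro t ht
    obtain ⟨ht0, htT⟩ := ht
    have hmem : ∀ s ∈ Set.Icc (0:ℝ) t, s ∈ Set.Ico (0:ℝ) T :=
      fun s hs => ⟨hs.1, lt_of_le_of_lt hs.2 htT⟩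
    have hcont : ContinuousOn w (Set.Icc 0 t) :=
      fun s hs => ((key s (hmem s hs)).continuousAt).continuousWithinAt
    have hderiv : ∀ s ∈ Set.Ico (0:ℝ) t,
        HasDerivWithinAt w ((1 + 2*a) * (γ 0 / γ s) * M s) (Set.Ici s) s :=
      fun s hs => (key s (hmem s ⟨hs.1, hs.2.le⟩)).hasDerivWithinAt
    have hbound : ∀ s ∈ Set.Ico (0:ℝ) t,
        ‖(1 + 2*a) * (γ 0 / γ s) * M s‖ ≤ (1 + 2*|a|) * ‖w s‖ + 0 := by
      intro s hs
      have hs' := hmem s ⟨hs.1, hs.2.le⟩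
      rw [Real.norm_eq_abs, Real.norm_eq_abs, abs_of_pos (wpos s hs'), add_zero]
      exact dbound s hs'
    have ha0 : ‖w 0‖ ≤ w 0 := by
      rw [Real.norm_eq_abs, abs_of_pos (wpos 0 ⟨le_refl _, lt_of_le_of_lt ht0 htT⟩)]
    have := norm_le_gronwallBound_of_norm_deriv_right_le hcont hderiv ha0 hbound t
      ⟨ht0, le_refl t⟩
    rw [gronwallBound_ε0, Real.norm_eq_abs,
      abs_of_pos (wpos t ⟨ht0, htT⟩), sub_zero] at this
    exact this
end

section
/- Under the setup M' = -½M² + (κ/2)γ² + a, γ' = -Mγ with κ > 0, γ(0) > 0, the bound w(t) ≤ w(0)e^{(1+2|a|)t} on w = κγ(0)γ + (γ(0)/γ)(1+M²) implies pointwise bounds: |M(t)| and γ(t) are bounded on [0,T] by a constant depending only on κ, a, T, γ(0), and M(0). In particular neither M nor γ can blow up in finite time. -/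
open Set

/-- Under `M' = -½M² + (κ/2)γ² + a`, `γ' = -Mγ` with `κ > 0`, `γ(0) > 0`, the bound
`w(t) ≤ w(0)e^{(1+2|a|)t}` on `w = κγ(0)γ + (γ(0)/γ)(1+M²)` yields pointwise bounds:
`|M(t)|` and `γ(t)` are bounded on `[0,T)` by a constant depending only on
`κ, a, T, γ(0), M(0)`. In particular neither `M` nor `γ` blows up in finite time. -/
theorem no_blowup_from_auxiliary_bound :
    ∃ C : ℝ → ℝ → ℝ → ℝ → ℝ → ℝ,
      ∀ (κ a T : ℝ) (M γ : ℝ → ℝ),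
        0 < κ → 0 < γ 0 →
        (∀ t ∈ Set.Ico (0:ℝ) T,
          HasDerivAt M (-(1/2) * (M t)^2 + (κ/2) * (γ t)^2 + a) t) →
        (∀ t ∈ Set.Ico (0:ℝ) T, HasDerivAt γ (-(M t) * γ t) t) →
        (∀ t ∈ Set.Ico (0:ℝ) T, 0 < γ t) →
        (∀ t ∈ Set.Ico (0:ℝ) T,
          κ * γ 0 * γ t + (γ 0 / γ t) * (1 + (M t)^2)
            ≤ (κ * γ 0 * γ 0 + (γ 0 / γ 0) * (1 + (M 0)^2))
              * Real.exp ((1 + 2 * |a|) * t)) →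
        ∀ t ∈ Set.Ico (0:ℝ) T,
          |M t| ≤ C κ a T (γ 0) (M 0) ∧ γ t ≤ C κ a T (γ 0) (M 0) := by
  refine ⟨fun κ a T g m =>
    (κ * g * g + (g / g) * (1 + m ^ 2)) * Real.exp ((1 + 2 * |a|) * T) / (κ * g)
    + (κ * g * g + (g / g) * (1 + m ^ 2)) * Real.exp ((1 + 2 * |a|) * T)
      / (g * Real.sqrt κ), ?_⟩
  intro κ a T M γ hκ hg _ _ hγpos hw t ht
  obtain ⟨ht0, htT⟩ := ht
  set g := γ 0 with hgdef
  set W := (κ * g * g + (g / g) * (1 + (M 0) ^ 2)) * Real.exp ((1 + 2 * |a|) * T)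
    with hWdef
  show |M t| ≤ W / (κ * g) + W / (g * Real.sqrt κ)
    ∧ γ t ≤ W / (κ * g) + W / (g * Real.sqrt κ)
  have hγt := hγpos t ⟨ht0, htT⟩
  have hwt := hw t ⟨ht0, htT⟩
  have hexp : Real.exp ((1 + 2 * |a|) * t) ≤ Real.exp ((1 + 2 * |a|) * T) := by
    apply Real.exp_le_exp.mpr
    have h1 : (0:ℝ) ≤ 1 + 2 * |a| := by positivity
    nlinarith
  have hw0pos : 0 < κ * g * g + (g / g) * (1 + (M 0) ^ 2) := by
    have h : g / g = 1 := div_self hg.ne'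
    rw [h]
    nlinarith [mul_pos (mul_pos hκ hg) hg, sq_nonneg (M 0)]
  have hWpos : 0 < W := mul_pos hw0pos (Real.exp_pos _)
  have hwtW : κ * g * γ t + (g / γ t) * (1 + (M t) ^ 2) ≤ W :=
    hwt.trans (mul_le_mul_of_nonneg_left hexp hw0pos.le)
  clear_value W
  clear hwt hexp hw0pos hw hWdef
  have hterm2 : 0 ≤ (g / γ t) * (1 + (M t) ^ 2) := by positivity
  have hγle : γ t ≤ W / (κ * g) := by
    rw [le_div_iff₀ (by positivity)]
    nlinarith
  have hM2 : 1 + (M t) ^ 2 ≤ W * γ t / g := by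
    rw [le_div_iff₀ hg]
    have h1 : (g / γ t) * (1 + (M t) ^ 2) ≤ W := by
      nlinarith [mul_pos hκ (mul_pos hg hγt)]
    have h2 : (g / γ t) * (1 + (M t) ^ 2) * γ t = g * (1 + (M t) ^ 2) := by
      field_simp
    nlinarith
  have hM2' : (M t) ^ 2 ≤ W ^ 2 / (κ * g ^ 2) := by
    have h3 : W * γ t / g ≤ W * (W / (κ * g)) / g := by
      gcongr
    have h4 : W * (W / (κ * g)) / g = W ^ 2 / (κ * g ^ 2) := by
      field_simp
    nlinarith
  have hsqrt : Real.sqrt κ > 0 := Real.sqrt_pos.mpr hκ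
  have hsq : (Real.sqrt κ) ^ 2 = κ := Real.sq_sqrt hκ.le
  have hB : (W / (g * Real.sqrt κ)) ^ 2 = W ^ 2 / (κ * g ^ 2) := by
    rw [div_pow]
    congr 1
    rw [mul_pow, hsq]; ring
  have hBpos : 0 < W / (g * Real.sqrt κ) := by positivity
  have hMabs : |M t| ≤ W / (g * Real.sqrt κ) := by
    rw [abs_le]
    constructor
    · nlinarith [sq_nonneg (M t + W / (g * Real.sqrt κ))]
    · nlinarith [sq_nonneg (M t - W / (g * Real.sqrt κ))]
  have hC1 : 0 < W / (κ * g) := by positivity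
  constructor
  · linarith [hMabs]
  · linarith [hγle]
end
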